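/- Let ℓ ≥ 5 be prime. (a) If f ∈ M_{2k} and ord_0(f̄) + ord_∞(f̄) + ord_{1/2}(f̄) > k, then ord_s(f̄) = +∞ for every cusp s and f̄ = 0, i.e. f ≡ 0 (mod ℓ). (b) If f ∈ M_{2k+1} and ord_0(f̄) + ord_∞(f̄) + ord_{1/2}(f̄) > k + 1/2, then ord_s(f̄) = +∞ for every cusp s and f̄ = 0. -/

import Mathlib

open PowerSeries Finset
noncomputable section
namespace Paper

/-- Membership in the local ring `ℤ_(ℓ) = {a/b ∈ ℚ : ℓ ∤ b}`. -/
def inZl (ℓ : ℕ) (x : ℚ) : Prop := ¬ (ℓ ∣ x.den)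

/-- `x ≡ 0 (mod ℓ)` in `ℤ_(ℓ)`, i.e. `x/ℓ ∈ ℤ_(ℓ)`. -/
def congMod (ℓ : ℕ) (x : ℚ) : Prop := inZl ℓ (x / ℓ)

/-- A power series lies in `ℤ_(ℓ)[[q]]`. -/
def ZlSeries (ℓ : ℕ) (f : PowerSeries ℚ) : Prop := ∀ n, inZl ℓ (coeff n f)

/-- Reduction of an element of `ℤ_(ℓ)` modulo ℓ. -/
def red (ℓ : ℕ) (x : ℚ) : ZMod ℓ := (x.num : ZMod ℓ) * (x.den : ZMod ℓ)⁻¹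

/-- Coefficientwise reduction mod ℓ of a power series. -/
def redS (ℓ : ℕ) (f : PowerSeries ℚ) : PowerSeries (ZMod ℓ) :=
  PowerSeries.mk fun n => red ℓ (coeff n f)

/-- The Ramanujan theta operator `Θ = q d/dq`. -/
def Th (f : PowerSeries ℚ) : PowerSeries ℚ := PowerSeries.mk fun n => (n : ℚ) * coeff n f

/-- Atkin's `U_ℓ` operator. -/
def U (ℓ : ℕ) (f : PowerSeries ℚ) : PowerSeries ℚ := PowerSeries.mk fun n => coeff (ℓ * n) f

/-- `θ₀ = ∑_{n ∈ ℤ} q^{n²}`. -/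
def theta0 : PowerSeries ℚ :=
  PowerSeries.mk fun n => if n = 0 then 1 else if (Nat.sqrt n) ^ 2 = n then 2 else 0

def theta0sq : PowerSeries ℚ := theta0 ^ 2

/-- `F = ∑_{n ≥ 0} σ₁(2n+1) q^{2n+1}`. -/
def Fser : PowerSeries ℚ :=
  PowerSeries.mk fun n => if Odd n then (∑ d ∈ n.divisors, (d : ℚ)) else 0

/-- `G = θ₀⁴`. -/
def Gser : PowerSeries ℚ := theta0 ^ 4

/-- `E = η⁸(z)/η⁴(2z) = θ₀⁴ - 16 F`. -/
def Eser : PowerSeries ℚ := Gser - 16 * Fser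

/-- The monomial basis `μ_{k,b} = (θ₀²)^{k-2b} F^b` of `M_k(Γ₁(4))`. -/
def mu (k b : ℕ) : PowerSeries ℚ := theta0sq ^ (k - 2 * b) * Fser ^ b

/-- `M_k(Γ₁(4))` with rational coefficients, realized through `q`-expansions:
the isobaric polynomials in `θ₀² ∈ M₁` and `F ∈ M₂`. -/
def Mk (k : ℕ) : Set (PowerSeries ℚ) :=
  {f | ∃ c : ℕ → ℚ, f = ∑ b ∈ range (k / 2 + 1), c b • mu k b}

/-- The filtration `ω(f) = inf {k' : f̄ ∈ M̄_{k'}}` (with coefficients in `ℤ_(ℓ)`). -/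
def filt (ℓ : ℕ) (f : PowerSeries ℚ) : ℕ :=
  sInf {k | ∃ g ∈ Mk k, ZlSeries ℓ g ∧ redS ℓ g = redS ℓ f}

/-- Coordinates of a weight-`k` form with respect to the basis `μ_{k,b}`. -/
def coords (k : ℕ) (f : PowerSeries ℚ) (b : ℕ) : ℚ :=
  Nat.strongRecOn b fun b ih =>
    coeff b (f - ∑ j ∈ (range b).attach, ih j.1 (mem_range.mp j.2) • mu k j.1)

/-- `∑_{j ≥ 0} u^{j²+j}`. -/
def psiSum : PowerSeries ℚ :=
  PowerSeries.mk fun n => (((range (n + 1)).filter fun j => j ^ 2 + j = n).card : ℚ)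

/-- Expansion of `θ₀²` at the cusp 1/2, in the variable `u = q^{1/2}`: `ψ⁴`. -/
def thetaHalf : PowerSeries ℚ := X * psiSum ^ 4

/-- Substitution `q ↦ u²`. -/
def expand2 (f : PowerSeries ℚ) : PowerSeries ℚ :=
  PowerSeries.mk fun n => if 2 ∣ n then coeff (n / 2) f else 0

/-- Expansion of `F` at the cusp 1/2 in the variable `u = q^{1/2}`: `θ₀⁴`. -/
def FHalf : PowerSeries ℚ := expand2 (theta0 ^ 4)

/-- Expansion of a weight-`k` form at the cusp 1/2, as a series in `u = q^{1/2}`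
(so orders `n/2` at the cusp 1/2 are recorded by `u`-order `n`). -/
def atHalf (k : ℕ) (f : PowerSeries ℚ) : PowerSeries ℚ :=
  ∑ b ∈ range (k / 2 + 1), coords k f b • (thetaHalf ^ (k - 2 * b) * FHalf ^ b)

def invU (m : ℕ) : PowerSeries ℚ := PowerSeries.invOfUnit (1 - X ^ m) 1

/-- `η⁸(z/4)/η⁴(z/2)` in the variable `t = q^{1/4}`. -/
def Hser : PowerSeries ℚ :=
  PowerSeries.mk fun n => coeff n (∏ m ∈ Icc 1 n, ((1 - X ^ m) ^ 8 * invU (2 * m) ^ 4))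

/-- Expansion of a weight-`k` form at the cusp 0, in the variable `t = q^{1/4}`
(after dividing out `i^k`, as in the paper); `θ₀² ↦ (-1/2)·θ₀²(z/4)`, `F ↦ (1/64)·η⁸(z/4)/η⁴(z/2)`. -/
def atZero (k : ℕ) (f : PowerSeries ℚ) : PowerSeries ℚ :=
  ∑ b ∈ range (k / 2 + 1),
    (coords k f b * (-1 / 2 : ℚ) ^ (k - 2 * b) * (1 / 64 : ℚ) ^ b) •
      (theta0sq ^ (k - 2 * b) * Hser ^ b)

/-- The normalized Eisenstein series `E_k = 1 - (2k/B_k) ∑ σ_{k-1}(n) qⁿ`. -/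
def Ek (k : ℕ) : PowerSeries ℚ :=
  1 - PowerSeries.C (2 * k / bernoulli k) *
    PowerSeries.mk fun n => ∑ d ∈ n.divisors, (d : ℚ) ^ (k - 1)

/-- `R(f) = (Θf - (k/12)E₂f)E_{ℓ-1} + (k/12)E_{ℓ+1}f` for `f` of weight `k`. -/
def Rop (ℓ k : ℕ) (f : PowerSeries ℚ) : PowerSeries ℚ :=
  (Th f - ((k : ℚ) / 12) • (Ek 2 * f)) * Ek (ℓ - 1) + ((k : ℚ) / 12) • (Ek (ℓ + 1) * f)

/-- `R_i^f`, of weight `k + i(ℓ+1)`. -/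
def Rit (ℓ k : ℕ) (f : PowerSeries ℚ) : ℕ → PowerSeries ℚ
  | 0 => f
  | i + 1 => Rop ℓ (k + i * (ℓ + 1)) (Rit ℓ k f i)

/-- The `ℤ_(ℓ)`-module `V^m̄ ⊆ M_{2k}`. -/
def VmZ (ℓ minf m0 mh k : ℕ) : Set (PowerSeries ℚ) :=
  {f | ∃ c : ℕ → ℚ, (∀ i, inZl ℓ (c i)) ∧
    f = ∑ i ∈ range (k - m0 - minf - mh + 1),
      c i • (Eser ^ (k - minf - mh - i) * Fser ^ (minf + i) * Gser ^ mh)}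

/-- The `ℤ_(ℓ)`-module `W_∞^m̄ ⊆ M_{2k}`. -/
def WinfZ (ℓ minf k : ℕ) : Set (PowerSeries ℚ) :=
  {f | ∃ c : ℕ → ℚ, (∀ i, inZl ℓ (c i)) ∧
    f = ∑ i ∈ range minf, c i • (Eser ^ (k - i) * Fser ^ i)}

/-- The `ℤ_(ℓ)`-module `W_0^m̄ ⊆ M_{2k}`. -/
def W0Z (ℓ m0 k : ℕ) : Set (PowerSeries ℚ) :=
  {f | ∃ c : ℕ → ℚ, (∀ i, inZl ℓ (c i)) ∧
    f = ∑ i ∈ range m0, c i • (Eser ^ i * Fser ^ (k - i))}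

/-- The `ℤ_(ℓ)`-module `W_{1/2}^m̄ ⊆ M_{2k}`. -/
def WhalfZ (ℓ m0 mh k : ℕ) : Set (PowerSeries ℚ) :=
  {f | ∃ c : ℕ → ℚ, (∀ i, inZl ℓ (c i)) ∧
    f = ∑ i ∈ range mh, c i • (Eser ^ m0 * Fser ^ (k - m0 - i) * Gser ^ i)}

/-- `f ∈ M_k` vanishes only at the cusps: by the valence formula,
`ord₀ f + ord_{1/2} f + ord_∞ f = k/2` (equality iff no zeros in the upper half
plane), stated here with denominators cleared (cusp `0` in `t = q^{1/4}`-units,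
cusp `1/2` in `u = q^{1/2}`-units, cusp `∞` in `q`-units). -/
def VOAC (k : ℕ) (f : PowerSeries ℚ) : Prop :=
  2 * PowerSeries.order (atZero k f) + PowerSeries.order (atHalf k f)
    + 2 * PowerSeries.order f = (k : ℕ∞)

section Aux
variable {ℓ : ℕ}

lemma Rat.mul_den_eq_num' (x : ℚ) : x * (x.den : ℚ) = (x.num : ℚ) := by
  have h : (x.den : ℚ) ≠ 0 := by exact_mod_cast x.den_ne_zero
  rw [eq_comm, ← div_eq_iff h, Rat.num_div_den]

lemma inZl_of_rep (hp : ℓ.Prime) {x : ℚ} {n d : ℤ} (hd : ¬ (ℓ:ℤ) ∣ d)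
    (h : x * (d:ℚ) = (n:ℚ)) : inZl ℓ x := by
  have hd0 : d ≠ 0 := by rintro rfl; exact hd (dvd_zero _)
  have hx : x = Rat.divInt n d := by
    rw [Rat.divInt_eq_div, eq_div_iff (by exact_mod_cast hd0)]; exact h
  intro hdvd
  exact hd (dvd_trans (Int.natCast_dvd_natCast.mpr (hx ▸ hdvd)) (Rat.den_dvd n d))

lemma cross (hp : ℓ.Prime) {x : ℚ} {n d : ℤ} (h : x * (d:ℚ) = (n:ℚ)) :
    x.num * d = n * (x.den : ℤ) := by
  have := Rat.mul_den_eq_num' x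
  have h2 : (x.num : ℚ) * d = n * (x.den : ℚ) := by
    calc (x.num : ℚ) * d = (x * x.den) * d := by rw [this]
    _ = (x * d) * x.den := by ring
    _ = n * x.den := by rw [h]
  exact_mod_cast h2

lemma red_of_rep (hp : ℓ.Prime) {x : ℚ} {n d : ℤ} (hd : ¬ (ℓ:ℤ) ∣ d)
    (h : x * (d:ℚ) = (n:ℚ)) : red ℓ x = (n : ZMod ℓ) * (d : ZMod ℓ)⁻¹ := by
  haveI : Fact ℓ.Prime := ⟨hp⟩
  have hden : ¬ (ℓ ∣ x.den) := inZl_of_rep hp hd h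
  have hd' : ((d : ℤ) : ZMod ℓ) ≠ 0 := by
    rw [Ne, ZMod.intCast_zmod_eq_zero_iff_dvd]; exact hd
  have hden' : ((x.den : ℕ) : ZMod ℓ) ≠ 0 := by
    rw [Ne, ZMod.natCast_eq_zero_iff]; exact hden
  have hc := cross hp h
  have : ((x.num * d : ℤ) : ZMod ℓ) = ((n * (x.den:ℤ) : ℤ) : ZMod ℓ) := by exact_mod_cast congrArg _ hc
  push_cast at this
  rw [red]
  field_simp
  linear_combination this

lemma ldvd (hp : ℓ.Prime) (hℓ : 5 ≤ ℓ) {m : ℕ} (hm : m ∣ 2 ^ 6) (hm0 : m ≠ 0) :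
    ¬ (ℓ:ℤ) ∣ (m : ℤ) := by
  intro h
  have h1 : ℓ ∣ m := Int.natCast_dvd_natCast.mp h
  have h2 : ℓ ∣ 2 ^ 6 := h1.trans hm
  have h3 := hp.dvd_of_dvd_pow h2
  have := Nat.le_of_dvd (by norm_num) h3
  omega

lemma rep_self {x : ℚ} (hx : inZl ℓ x) : ¬ (ℓ:ℤ) ∣ ((x.den : ℕ) : ℤ) := by
  intro h; exact hx (Int.natCast_dvd_natCast.mp h)

lemma red_def' (x : ℚ) : red ℓ x = (x.num : ZMod ℓ) * ((x.den : ℕ) : ZMod ℓ)⁻¹ := rfl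

lemma den_ne (hp : ℓ.Prime) {x : ℚ} (hx : inZl ℓ x) : ((x.den : ℕ) : ZMod ℓ) ≠ 0 := by
  haveI : Fact ℓ.Prime := ⟨hp⟩
  rw [Ne, ZMod.natCast_eq_zero_iff]; exact hx

lemma dvd_mul_den (hp : ℓ.Prime) {x y : ℚ} (hx : inZl ℓ x) (hy : inZl ℓ y) :
    ¬ (ℓ:ℤ) ∣ ((x.den : ℤ) * (y.den : ℤ)) := by
  intro h
  rcases (Int.Prime.dvd_mul' (by exact_mod_cast hp) h) with h | h
  exacts [rep_self hx h, rep_self hy h]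

lemma inZl_add (hp : ℓ.Prime) {x y : ℚ} (hx : inZl ℓ x) (hy : inZl ℓ y) :
    inZl ℓ (x + y) := by
  apply inZl_of_rep hp (n := x.num * y.den + y.num * x.den) (d := (x.den : ℤ) * (y.den : ℤ))
  · exact dvd_mul_den hp hx hy
  · push_cast
    rw [← Rat.mul_den_eq_num' x, ← Rat.mul_den_eq_num' y]; ring

lemma inZl_mul (hp : ℓ.Prime) {x y : ℚ} (hx : inZl ℓ x) (hy : inZl ℓ y) :
    inZl ℓ (x * y) := by
  apply inZl_of_rep hp (n := x.num * y.num) (d := (x.den : ℤ) * (y.den : ℤ))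
  · exact dvd_mul_den hp hx hy
  · push_cast
    rw [← Rat.mul_den_eq_num' x, ← Rat.mul_den_eq_num' y]; ring

lemma inZl_neg {x : ℚ} (hx : inZl ℓ x) : inZl ℓ (-x) := by
  unfold inZl at *; rwa [Rat.neg_den]

lemma red_add (hp : ℓ.Prime) {x y : ℚ} (hx : inZl ℓ x) (hy : inZl ℓ y) :
    red ℓ (x + y) = red ℓ x + red ℓ y := by
  haveI : Fact ℓ.Prime := ⟨hp⟩
  have h : (x + y) * (((x.den : ℤ) * (y.den : ℤ) : ℤ) : ℚ)
      = ((x.num * y.den + y.num * x.den : ℤ) : ℚ) := by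
    push_cast; rw [← Rat.mul_den_eq_num' x, ← Rat.mul_den_eq_num' y]; ring
  rw [red_of_rep hp (dvd_mul_den hp hx hy) h, red_def' x, red_def' y]
  have h1 := den_ne hp hx
  have h2 := den_ne hp hy
  push_cast
  field_simp

lemma red_mul (hp : ℓ.Prime) {x y : ℚ} (hx : inZl ℓ x) (hy : inZl ℓ y) :
    red ℓ (x * y) = red ℓ x * red ℓ y := by
  haveI : Fact ℓ.Prime := ⟨hp⟩
  have h : (x * y) * (((x.den : ℤ) * (y.den : ℤ) : ℤ) : ℚ)
      = ((x.num * y.num : ℤ) : ℚ) := by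
    push_cast; rw [← Rat.mul_den_eq_num' x, ← Rat.mul_den_eq_num' y]; ring
  rw [red_of_rep hp (dvd_mul_den hp hx hy) h, red_def' x, red_def' y]
  have h1 := den_ne hp hx
  have h2 := den_ne hp hy
  push_cast
  field_simp

lemma red_intCast (n : ℤ) : red ℓ (n : ℚ) = (n : ZMod ℓ) := by
  rw [red_def']
  simp [Rat.den_intCast, Rat.num_intCast]

lemma inZl_intCast (hp : ℓ.Prime) (n : ℤ) : inZl ℓ ((n : ℤ) : ℚ) := by
  unfold inZl
  rw [Rat.den_intCast]
  intro h
  have := Nat.dvd_one.mp h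
  have := hp.two_le
  omega

lemma red_neg (hp : ℓ.Prime) {x : ℚ} (hx : inZl ℓ x) : red ℓ (-x) = - red ℓ x := by
  have h : (-x) * ((x.den : ℤ) : ℚ) = ((-x.num : ℤ) : ℚ) := by
    push_cast; rw [← Rat.mul_den_eq_num' x]; ring
  rw [red_of_rep hp (rep_self hx) h, red_def' x]
  push_cast; ring

lemma inZl_sub (hp : ℓ.Prime) {x y : ℚ} (hx : inZl ℓ x) (hy : inZl ℓ y) :
    inZl ℓ (x - y) := by
  rw [sub_eq_add_neg]; exact inZl_add hp hx (inZl_neg hy)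

lemma red_sub (hp : ℓ.Prime) {x y : ℚ} (hx : inZl ℓ x) (hy : inZl ℓ y) :
    red ℓ (x - y) = red ℓ x - red ℓ y := by
  rw [sub_eq_add_neg, red_add hp hx (inZl_neg hy), red_neg hp hy, sub_eq_add_neg]

lemma inZl_sum (hp : ℓ.Prime) {α : Type*} (s : Finset α) (g : α → ℚ)
    (h : ∀ a ∈ s, inZl ℓ (g a)) : inZl ℓ (∑ a ∈ s, g a) := by
  classical
  induction s using Finset.induction_on with
  | empty => simpa using inZl_intCast hp 0
  | insert _ _ hns ih =>
    rw [Finset.sum_insert hns]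
    exact inZl_add hp (h _ (Finset.mem_insert_self _ _))
      (ih fun a ha => h a (Finset.mem_insert_of_mem ha))

lemma red_sum (hp : ℓ.Prime) {α : Type*} (s : Finset α) (g : α → ℚ)
    (h : ∀ a ∈ s, inZl ℓ (g a)) : red ℓ (∑ a ∈ s, g a) = ∑ a ∈ s, red ℓ (g a) := by
  classical
  induction s using Finset.induction_on with
  | empty => simpa using red_intCast (ℓ := ℓ) 0
  | insert _ _ hns ih =>
    rw [Finset.sum_insert hns, Finset.sum_insert hns,
      red_add hp (h _ (Finset.mem_insert_self _ _))
        (inZl_sum hp _ _ fun a ha => h a (Finset.mem_insert_of_mem ha)),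
      ih fun a ha => h a (Finset.mem_insert_of_mem ha)]

lemma inZl_pow (hp : ℓ.Prime) {x : ℚ} (hx : inZl ℓ x) (e : ℕ) : inZl ℓ (x ^ e) := by
  induction e with
  | zero => simpa using inZl_intCast hp 1
  | succ e ih => rw [pow_succ]; exact inZl_mul hp ih hx

lemma red_pow (hp : ℓ.Prime) {x : ℚ} (hx : inZl ℓ x) (e : ℕ) :
    red ℓ (x ^ e) = red ℓ x ^ e := by
  induction e with
  | zero => simpa using red_intCast (ℓ := ℓ) 1
  | succ e ih => rw [pow_succ, red_mul hp (inZl_pow hp hx e) hx, ih, pow_succ]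

lemma red_one (hp : ℓ.Prime) : red ℓ (1 : ℚ) = 1 := by simpa using red_intCast (ℓ := ℓ) 1

lemma red_ne_zero_of_unit (hp : ℓ.Prime) {x y : ℚ} (hx : inZl ℓ x) (hy : inZl ℓ y)
    (h : x * y = 1) : red ℓ x ≠ 0 := by
  haveI : Fact ℓ.Prime := ⟨hp⟩
  intro h0
  have := red_mul hp hx hy
  rw [h, red_one hp, h0, zero_mul] at this
  exact one_ne_zero this

section SeriesAux

variable {R : Type*} [CommRing R]

lemma coeff_mul_low {f g : R⟦X⟧} {a b : ℕ} (hf : ∀ j < a, coeff j f = 0)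
    (hg : ∀ j < b, coeff j g = 0) :
    (∀ j < a + b, coeff j (f * g) = 0) ∧
      coeff (a + b) (f * g) = coeff a f * coeff b g := by
  constructor
  · intro j hj
    rw [PowerSeries.coeff_mul]
    apply Finset.sum_eq_zero
    rintro ⟨p, q⟩ hpq
    rw [Finset.HasAntidiagonal.mem_antidiagonal] at hpq
    simp only
    rcases lt_or_ge p a with h | h
    · rw [hf p h, zero_mul]
    · rw [hg q (by omega), mul_zero]
  · rw [PowerSeries.coeff_mul]
    apply Finset.sum_eq_single_of_mem (a, b) (by rw [Finset.HasAntidiagonal.mem_antidiagonal])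
    rintro ⟨p, q⟩ hpq hne
    rw [Finset.HasAntidiagonal.mem_antidiagonal] at hpq
    simp only
    have hor : p < a ∨ q < b := by
      by_contra hc
      push_neg at hc
      refine hne ?_
      have : p = a ∧ q = b := by omega
      simp [this.1, this.2]
    rcases hor with h | h
    · rw [hf p h, zero_mul]
    · rw [hg q h, mul_zero]

lemma coeff_unit_mul {u g : R⟦X⟧} {b : ℕ} (hg : ∀ j < b, coeff j g = 0) :
    (∀ j < b, coeff j (u * g) = 0) ∧
      coeff b (u * g) = constantCoeff u * coeff b g := by
  have h := coeff_mul_low (f := u) (a := 0) (fun j hj => absurd hj (Nat.not_lt_zero j)) hg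
  simpa using h

lemma pow_low {g : R⟦X⟧} (hg : constantCoeff g = 0) (i : ℕ) :
    (∀ j < i, coeff j (g ^ i) = 0) ∧ coeff i (g ^ i) = (coeff 1 g) ^ i := by
  induction i with
  | zero => exact ⟨fun j hj => absurd hj (Nat.not_lt_zero j), by simp⟩
  | succ i ih =>
    have hg1 : ∀ j < 1, coeff j g = 0 := by
      intro j hj
      interval_cases j
      simpa using hg
    have h := coeff_mul_low (f := g ^ i) (a := i) (b := 1) ih.1 hg1
    rw [pow_succ]
    exact ⟨h.1, by rw [h.2, ih.2, pow_succ]⟩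

lemma coeff_one_mul' (f g : R⟦X⟧) :
    coeff 1 (f * g) = constantCoeff f * coeff 1 g + coeff 1 f * constantCoeff g := by
  rw [PowerSeries.coeff_mul, Finset.Nat.sum_antidiagonal_eq_sum_range_succ_mk]
  rw [show (1:ℕ).succ = 2 from rfl, Finset.sum_range_succ, Finset.sum_range_succ,
    Finset.sum_range_zero]
  simp

end SeriesAux

section IntCAux

def ZS : Subring ℚ := (Int.castRingHom ℚ).range

def IntC (f : PowerSeries ℚ) : Prop := ∀ n, coeff n f ∈ ZS

variable {ℓ : ℕ}

lemma inZl_of_ZS (hp : ℓ.Prime) {x : ℚ} (hx : x ∈ ZS) : inZl ℓ x := by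
  obtain ⟨m, rfl⟩ := hx
  exact inZl_intCast hp m

lemma natCast_mem_ZS (n : ℕ) : ((n : ℚ)) ∈ ZS := ⟨n, by simp⟩

lemma ZlSeries_of_IntC (hp : ℓ.Prime) {f : PowerSeries ℚ} (hf : IntC f) : ZlSeries ℓ f :=
  fun n => inZl_of_ZS hp (hf n)

lemma IntC_mul {f g : PowerSeries ℚ} (hf : IntC f) (hg : IntC g) : IntC (f * g) := by
  intro n
  rw [PowerSeries.coeff_mul]
  exact Subring.sum_mem _ fun p _ => Subring.mul_mem _ (hf p.1) (hg p.2)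

lemma IntC_one : IntC 1 := by
  intro n
  rw [PowerSeries.coeff_one]
  split <;> simp [Subring.one_mem, Subring.zero_mem]

lemma IntC_X_pow (m : ℕ) : IntC (X ^ m) := by
  intro n
  rw [PowerSeries.coeff_X_pow]
  split <;> simp [Subring.one_mem, Subring.zero_mem]

lemma IntC_X : IntC (X : PowerSeries ℚ) := by simpa using IntC_X_pow 1

lemma IntC_sub {f g : PowerSeries ℚ} (hf : IntC f) (hg : IntC g) : IntC (f - g) := by
  intro n
  rw [map_sub]
  exact Subring.sub_mem _ (hf n) (hg n)

lemma IntC_pow {f : PowerSeries ℚ} (hf : IntC f) (e : ℕ) : IntC (f ^ e) := by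
  induction e with
  | zero => simpa using IntC_one
  | succ e ih => rw [pow_succ]; exact IntC_mul ih hf

lemma IntC_prod {α : Type*} (s : Finset α) (g : α → PowerSeries ℚ)
    (h : ∀ a ∈ s, IntC (g a)) : IntC (∏ a ∈ s, g a) := by
  classical
  induction s using Finset.induction_on with
  | empty => simpa using IntC_one
  | insert _ _ hns ih =>
    rw [Finset.prod_insert hns]
    exact IntC_mul (h _ (Finset.mem_insert_self _ _))
      (ih fun a ha => h a (Finset.mem_insert_of_mem ha))

lemma IntC_invOfUnit {f : PowerSeries ℚ} (hf : IntC f) :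
    IntC (PowerSeries.invOfUnit f 1) := by
  intro n
  induction n using Nat.strongRecOn with
  | ind n ih =>
    rw [PowerSeries.coeff_invOfUnit]
    split
    · simpa using Subring.one_mem ZS
    · refine Subring.mul_mem _ ?_ (Subring.sum_mem _ fun p hp => ?_)
      · simpa using Subring.neg_mem _ (Subring.one_mem ZS)
      · split
        next h => exact Subring.mul_mem _ (hf _) (ih p.2 h)
        next => exact Subring.zero_mem _

lemma IntC_theta0 : IntC theta0 := by
  intro n
  rw [theta0, PowerSeries.coeff_mk]
  split_ifs <;> first
    | exact Subring.one_mem _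
    | simpa using natCast_mem_ZS 2
    | exact Subring.zero_mem _

lemma IntC_Fser : IntC Fser := by
  intro n
  rw [Fser, PowerSeries.coeff_mk]
  split_ifs
  · rw [← Nat.cast_sum]
    exact natCast_mem_ZS _
  · exact Subring.zero_mem _

lemma IntC_psiSum : IntC psiSum := by
  intro n
  rw [psiSum, PowerSeries.coeff_mk]
  exact natCast_mem_ZS _

lemma IntC_theta0sq : IntC theta0sq := IntC_pow IntC_theta0 2

lemma IntC_expand2 {f : PowerSeries ℚ} (hf : IntC f) : IntC (expand2 f) := by
  intro n
  rw [expand2, PowerSeries.coeff_mk]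
  split
  · exact hf _
  · exact Subring.zero_mem _

lemma IntC_FHalf : IntC FHalf := IntC_expand2 (IntC_pow IntC_theta0 4)

lemma IntC_thetaHalf : IntC thetaHalf := IntC_mul IntC_X (IntC_pow IntC_psiSum 4)

lemma IntC_invU (m : ℕ) : IntC (invU m) := IntC_invOfUnit (IntC_sub IntC_one (IntC_X_pow m))

lemma IntC_Hser : IntC Hser := by
  intro n
  rw [Hser, PowerSeries.coeff_mk]
  exact IntC_prod _ _ (fun m _ => IntC_mul (IntC_pow (IntC_sub IntC_one (IntC_X_pow m)) 8)
    (IntC_pow (IntC_invU (2 * m)) 4)) n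

lemma IntC_mu (k b : ℕ) : IntC (mu k b) :=
  IntC_mul (IntC_pow IntC_theta0sq _) (IntC_pow IntC_Fser _)

end IntCAux

section CoeffComp

lemma coeff_one_pow {R : Type*} [CommRing R] {f : PowerSeries R}
    (h0 : constantCoeff f = 1) (m : ℕ) :
    constantCoeff (f ^ m) = 1 ∧ coeff 1 (f ^ m) = m * coeff 1 f := by
  induction m with
  | zero => simp
  | succ m ih =>
    rw [pow_succ]
    constructor
    · rw [map_mul, ih.1, h0, one_mul]
    · rw [coeff_one_mul', ih.1, ih.2, h0]
      push_cast; ring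

lemma theta0_c0 : constantCoeff theta0 = 1 := by
  rw [← PowerSeries.coeff_zero_eq_constantCoeff, theta0, PowerSeries.coeff_mk]; norm_num

lemma theta0_c1 : coeff 1 theta0 = 2 := by
  rw [theta0, PowerSeries.coeff_mk]; norm_num

lemma theta0sq_c0 : constantCoeff theta0sq = 1 := by
  rw [theta0sq, map_pow, theta0_c0, one_pow]

lemma theta0sq_c1 : coeff 1 theta0sq = 4 := by
  rw [theta0sq, (coeff_one_pow theta0_c0 2).2, theta0_c1]; norm_num

lemma Fser_c0 : constantCoeff Fser = 0 := by
  rw [← PowerSeries.coeff_zero_eq_constantCoeff, Fser, PowerSeries.coeff_mk]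
  norm_num [Nat.odd_iff]

lemma Fser_c1 : coeff 1 Fser = 1 := by
  rw [Fser, PowerSeries.coeff_mk]
  norm_num [Nat.divisors_one]

lemma psiSum_c0 : constantCoeff psiSum = 1 := by
  have h : ((range 1).filter fun j => j ^ 2 + j = 0).card = 1 := by decide
  rw [← PowerSeries.coeff_zero_eq_constantCoeff, psiSum, PowerSeries.coeff_mk, h]
  norm_num

lemma FHalf_c0 : constantCoeff FHalf = 1 := by
  have h4 : coeff 0 (theta0 ^ 4) = 1 := by
    rw [PowerSeries.coeff_zero_eq_constantCoeff, map_pow, theta0_c0, one_pow]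
  rw [← PowerSeries.coeff_zero_eq_constantCoeff, FHalf, expand2, PowerSeries.coeff_mk]
  norm_num [h4]

lemma thetaHalf_c0 : constantCoeff thetaHalf = 0 := by
  rw [thetaHalf, map_mul, PowerSeries.constantCoeff_X, zero_mul]

lemma thetaHalf_c1 : coeff 1 thetaHalf = 1 := by
  rw [thetaHalf, coeff_one_mul', PowerSeries.constantCoeff_X, PowerSeries.coeff_one_X]
  rw [zero_mul, one_mul, zero_add, map_pow, psiSum_c0, one_pow]

lemma Hser_c0 : constantCoeff Hser = 1 := by
  rw [← PowerSeries.coeff_zero_eq_constantCoeff, Hser, PowerSeries.coeff_mk,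
    Finset.Icc_eq_empty (by omega), Finset.prod_empty]
  simp

lemma invU2_c0 : constantCoeff (invU 2) = 1 := by
  rw [invU, PowerSeries.constantCoeff_invOfUnit]; simp

lemma invU2_c1 : coeff 1 (invU 2) = 0 := by
  rw [invU, PowerSeries.coeff_invOfUnit]
  norm_num
  rw [Finset.Nat.sum_antidiagonal_eq_sum_range_succ_mk,
    show (1:ℕ).succ = 2 from rfl, Finset.sum_range_succ, Finset.sum_range_succ,
    Finset.sum_range_zero]
  simp [PowerSeries.coeff_X_pow]

lemma oneSubX_c0 : constantCoeff (1 - X : PowerSeries ℚ) = 1 := by simp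

lemma oneSubX_c1 : coeff 1 ((1 : PowerSeries ℚ) - X) = -1 := by
  rw [map_sub, PowerSeries.coeff_one, PowerSeries.coeff_one_X]; norm_num

lemma Hser_c1 : coeff 1 Hser = -8 := by
  have hA0 : constantCoeff ((1 - X : PowerSeries ℚ) ^ 8) = 1 := by
    rw [map_pow, oneSubX_c0, one_pow]
  have hA1 : coeff 1 ((1 - X : PowerSeries ℚ) ^ 8) = -8 := by
    rw [(coeff_one_pow oneSubX_c0 8).2, oneSubX_c1]; norm_num
  have hB0 : constantCoeff (invU 2 ^ 4) = 1 := by rw [map_pow, invU2_c0, one_pow]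
  have hB1 : coeff 1 (invU 2 ^ 4) = 0 := by
    rw [(coeff_one_pow invU2_c0 4).2, invU2_c1, mul_zero]
  rw [Hser, PowerSeries.coeff_mk, Finset.Icc_self, Finset.prod_singleton,
    show (2*1 : ℕ) = 2 from rfl, pow_one (X : PowerSeries ℚ), coeff_one_mul',
    hA0, hA1, hB0, hB1]
  norm_num

lemma mu_low (k b : ℕ) : (∀ j < b, coeff j (mu k b) = 0) ∧ coeff b (mu k b) = 1 := by
  have hF := pow_low (g := Fser) Fser_c0 b
  have h := coeff_unit_mul (u := theta0sq ^ (k - 2 * b)) hF.1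
  rw [mu]
  exact ⟨h.1, by rw [h.2, hF.2, Fser_c1, one_pow, map_pow, theta0sq_c0, one_pow, mul_one]⟩

end CoeffComp

section CoordsAux

lemma coords_eq (k : ℕ) (f : PowerSeries ℚ) (b : ℕ) :
    coords k f b = coeff b (f - ∑ j ∈ range b, coords k f j • mu k j) := by
  have h : coords k f b
      = coeff b (f - ∑ j ∈ (range b).attach, coords k f j.1 • mu k j.1) := by
    unfold coords
    rw [Nat.strongRecOn_eq]
  rw [h, Finset.sum_attach (range b) (fun j => coords k f j • mu k j)]

lemma coords_spec {k : ℕ} {f : PowerSeries ℚ} {c : ℕ → ℚ}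
    (hf : f = ∑ b ∈ range (k / 2 + 1), c b • mu k b) :
    ∀ b ∈ range (k / 2 + 1), coords k f b = c b := by
  intro b hb
  induction b using Nat.strongRecOn with
  | ind b ih =>
    have hsub : range b ⊆ range (k / 2 + 1) := by
      rw [mem_range] at hb
      exact Finset.range_subset_range.mpr (by omega)
    rw [coords_eq,
      show ∑ j ∈ range b, coords k f j • mu k j = ∑ j ∈ range b, c j • mu k j from
        Finset.sum_congr rfl fun j hj => by rw [ih j (mem_range.mp hj) (hsub hj)],
      hf, ← Finset.sum_sdiff_eq_sub hsub, map_sum]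
    rw [Finset.sum_eq_single_of_mem b
      (Finset.mem_sdiff.mpr ⟨hb, Finset.notMem_range_self⟩)]
    · rw [PowerSeries.coeff_smul, smul_eq_mul, (mu_low k b).2, mul_one]
    · intro j hj hne
      rw [Finset.mem_sdiff, mem_range, mem_range] at hj
      rw [PowerSeries.coeff_smul, smul_eq_mul, (mu_low k j).1 b (by omega), mul_zero]

variable {ℓ : ℕ}

lemma coords_inZl (hp : ℓ.Prime) {f : PowerSeries ℚ} (hZ : ZlSeries ℓ f) (k : ℕ) :
    ∀ b, inZl ℓ (coords k f b) := by
  intro b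
  induction b using Nat.strongRecOn with
  | ind b ih =>
    rw [coords_eq, map_sub, map_sum]
    refine inZl_sub hp (hZ b) (inZl_sum hp _ _ fun j hj => ?_)
    rw [PowerSeries.coeff_smul, smul_eq_mul]
    exact inZl_mul hp (ih j (mem_range.mp hj)) (inZl_of_ZS hp (IntC_mu k j b))

end CoordsAux

section RedSAux

variable {ℓ : ℕ}

lemma coeff_redS (f : PowerSeries ℚ) (n : ℕ) :
    coeff n (redS ℓ f) = red ℓ (coeff n f) := by
  rw [redS, PowerSeries.coeff_mk]

lemma ZlSeries_mul (hp : ℓ.Prime) {f g : PowerSeries ℚ} (hf : ZlSeries ℓ f)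
    (hg : ZlSeries ℓ g) : ZlSeries ℓ (f * g) := by
  intro n
  rw [PowerSeries.coeff_mul]
  exact inZl_sum hp _ _ fun p _ => inZl_mul hp (hf p.1) (hg p.2)

lemma ZlSeries_pow (hp : ℓ.Prime) {f : PowerSeries ℚ} (hf : ZlSeries ℓ f) (e : ℕ) :
    ZlSeries ℓ (f ^ e) := by
  induction e with
  | zero => intro n; rw [pow_zero]; exact inZl_of_ZS hp (IntC_one n)
  | succ e ih => rw [pow_succ]; exact ZlSeries_mul hp ih hf

lemma ZlSeries_smul (hp : ℓ.Prime) {c : ℚ} {f : PowerSeries ℚ} (hc : inZl ℓ c)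
    (hf : ZlSeries ℓ f) : ZlSeries ℓ (c • f) := by
  intro n
  rw [PowerSeries.coeff_smul, smul_eq_mul]
  exact inZl_mul hp hc (hf n)

lemma ZlSeries_sum (hp : ℓ.Prime) {α : Type*} (s : Finset α) (g : α → PowerSeries ℚ)
    (h : ∀ a ∈ s, ZlSeries ℓ (g a)) : ZlSeries ℓ (∑ a ∈ s, g a) := by
  intro n
  rw [map_sum]
  exact inZl_sum hp _ _ fun a ha => h a ha n

lemma redS_sum (hp : ℓ.Prime) {α : Type*} (s : Finset α) (g : α → PowerSeries ℚ)
    (h : ∀ a ∈ s, ZlSeries ℓ (g a)) :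
    redS ℓ (∑ a ∈ s, g a) = ∑ a ∈ s, redS ℓ (g a) := by
  ext n
  rw [coeff_redS, map_sum, map_sum, red_sum hp _ _ fun a ha => h a ha n]
  exact Finset.sum_congr rfl fun a _ => (coeff_redS _ _).symm

lemma redS_mul (hp : ℓ.Prime) {f g : PowerSeries ℚ} (hf : ZlSeries ℓ f)
    (hg : ZlSeries ℓ g) : redS ℓ (f * g) = redS ℓ f * redS ℓ g := by
  ext n
  rw [coeff_redS, PowerSeries.coeff_mul, PowerSeries.coeff_mul,
    red_sum hp _ _ fun p _ => inZl_mul hp (hf p.1) (hg p.2)]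
  exact Finset.sum_congr rfl fun p _ => by
    rw [red_mul hp (hf p.1) (hg p.2), coeff_redS, coeff_redS]

lemma redS_one (hp : ℓ.Prime) : redS ℓ 1 = 1 := by
  ext n
  rw [coeff_redS, PowerSeries.coeff_one, PowerSeries.coeff_one]
  split
  · exact red_one hp
  · simpa using red_intCast (ℓ := ℓ) 0

lemma redS_pow (hp : ℓ.Prime) {f : PowerSeries ℚ} (hf : ZlSeries ℓ f) (e : ℕ) :
    redS ℓ (f ^ e) = redS ℓ f ^ e := by
  induction e with
  | zero => rw [pow_zero, pow_zero]; exact redS_one hp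
  | succ e ih => rw [pow_succ, pow_succ, redS_mul hp (ZlSeries_pow hp hf e) hf, ih]

lemma redS_smul (hp : ℓ.Prime) {c : ℚ} {f : PowerSeries ℚ} (hc : inZl ℓ c)
    (hf : ZlSeries ℓ f) : redS ℓ (c • f) = red ℓ c • redS ℓ f := by
  ext n
  rw [coeff_redS, PowerSeries.coeff_smul, PowerSeries.coeff_smul, smul_eq_mul, smul_eq_mul,
    red_mul hp hc (hf n), coeff_redS]

lemma redS_X (hp : ℓ.Prime) : redS ℓ X = X := by
  ext n
  rw [coeff_redS, PowerSeries.coeff_X, PowerSeries.coeff_X]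
  split
  · exact red_one hp
  · simpa using red_intCast (ℓ := ℓ) 0

end RedSAux

section MainAux

lemma main_lemma (ℓ : ℕ) (hp : ℓ.Prime) (hℓ : 5 ≤ ℓ) (K : ℕ) (f : PowerSeries ℚ)
    (hf : f ∈ Mk K) (hZ : ZlSeries ℓ f)
    (hlt : ((K : ℕ) : ℕ∞) < 2 * PowerSeries.order (redS ℓ (atZero K f))
      + 2 * PowerSeries.order (redS ℓ f) + PowerSeries.order (redS ℓ (atHalf K f))) :
    redS ℓ f = 0 ∧ PowerSeries.order (redS ℓ f) = ⊤ ∧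
      PowerSeries.order (redS ℓ (atZero K f)) = ⊤ ∧
      PowerSeries.order (redS ℓ (atHalf K f)) = ⊤ := by
  haveI : Fact ℓ.Prime := ⟨hp⟩
  obtain ⟨c, hc⟩ := hf
  have hco : ∀ b ∈ range (K / 2 + 1), coords K f b = c b := coords_spec hc
  have hrep : f = ∑ b ∈ range (K / 2 + 1), coords K f b • mu K b := by
    rw [show ∑ b ∈ range (K / 2 + 1), coords K f b • mu K b
        = ∑ b ∈ range (K / 2 + 1), c b • mu K b from
      Finset.sum_congr rfl fun b hb => by rw [hco b hb]]
    exact hc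
  have hiz : ∀ b, inZl ℓ (coords K f b) := coords_inZl hp hZ K
  set cb : ℕ → ZMod ℓ := fun b => red ℓ (coords K f b) with hcb
  -- scalars
  have hd2 : ¬ (ℓ:ℤ) ∣ ((2:ℕ) : ℤ) := ldvd hp hℓ (by norm_num) (by norm_num)
  have hd64 : ¬ (ℓ:ℤ) ∣ ((64:ℕ) : ℤ) := ldvd hp hℓ (by norm_num) (by norm_num)
  have hiz1 : inZl ℓ (-1/2 : ℚ) :=
    inZl_of_rep hp (n := -1) (d := ((2:ℕ):ℤ)) hd2 (by norm_num)
  have hiz2 : inZl ℓ (1/64 : ℚ) :=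
    inZl_of_rep hp (n := 1) (d := ((64:ℕ):ℤ)) hd64 (by norm_num)
  have hre1 : red ℓ (-1/2 : ℚ) ≠ 0 :=
    red_ne_zero_of_unit hp hiz1 (inZl_intCast hp (-2)) (by norm_num)
  have hre2 : red ℓ (1/64 : ℚ) ≠ 0 :=
    red_ne_zero_of_unit hp hiz2 (inZl_intCast hp 64) (by norm_num)
  set eE : ℕ → ZMod ℓ :=
    fun b => red ℓ (-1/2 : ℚ) ^ (K - 2*b) * red ℓ (1/64 : ℚ) ^ b with heEdef
  have heE : ∀ b, eE b ≠ 0 := fun b =>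
    mul_ne_zero (pow_ne_zero _ hre1) (pow_ne_zero _ hre2)
  -- reduced series
  set T : PowerSeries (ZMod ℓ) := redS ℓ theta0sq with hT
  set Fb : PowerSeries (ZMod ℓ) := redS ℓ Fser with hFb
  set tH : PowerSeries (ZMod ℓ) := redS ℓ thetaHalf with htH
  set FH : PowerSeries (ZMod ℓ) := redS ℓ FHalf with hFH
  set Hb : PowerSeries (ZMod ℓ) := redS ℓ Hser with hHb
  have cC_redS : ∀ g : PowerSeries ℚ,
      constantCoeff (redS ℓ g) = red ℓ (constantCoeff g) := by
    intro g
    rw [← PowerSeries.coeff_zero_eq_constantCoeff, coeff_redS,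
      PowerSeries.coeff_zero_eq_constantCoeff]
  have red4 : red ℓ (4 : ℚ) = (4 : ZMod ℓ) := by
    rw [show (4:ℚ) = ((4:ℤ):ℚ) by norm_num, red_intCast]; push_cast; ring
  have redneg8 : red ℓ (-8 : ℚ) = (-8 : ZMod ℓ) := by
    rw [show (-8:ℚ) = ((-8:ℤ):ℚ) by norm_num, red_intCast]; push_cast; ring
  have red0 : red ℓ (0 : ℚ) = 0 := by simpa using red_intCast (ℓ := ℓ) 0
  have hT0 : constantCoeff T = 1 := by rw [hT, cC_redS, theta0sq_c0, red_one hp]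
  have hT1 : coeff 1 T = 4 := by rw [hT, coeff_redS, theta0sq_c1, red4]
  have hF0 : constantCoeff Fb = 0 := by rw [hFb, cC_redS, Fser_c0, red0]
  have hF1 : coeff 1 Fb = 1 := by rw [hFb, coeff_redS, Fser_c1, red_one hp]
  have htH0 : constantCoeff tH = 0 := by rw [htH, cC_redS, thetaHalf_c0, red0]
  have htH1 : coeff 1 tH = 1 := by rw [htH, coeff_redS, thetaHalf_c1, red_one hp]
  have hFH0 : constantCoeff FH = 1 := by rw [hFH, cC_redS, FHalf_c0, red_one hp]
  have hH0 : constantCoeff Hb = 1 := by rw [hHb, cC_redS, Hser_c0, red_one hp]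
  have hH1 : coeff 1 Hb = -8 := by rw [hHb, coeff_redS, Hser_c1, redneg8]
  -- the three expansions
  have hZmu : ∀ b, ZlSeries ℓ (mu K b) := fun b => ZlSeries_of_IntC hp (IntC_mu K b)
  have hZt : ZlSeries ℓ theta0sq := ZlSeries_of_IntC hp IntC_theta0sq
  have hZF : ZlSeries ℓ Fser := ZlSeries_of_IntC hp IntC_Fser
  have hZtH : ZlSeries ℓ thetaHalf := ZlSeries_of_IntC hp IntC_thetaHalf
  have hZFH : ZlSeries ℓ FHalf := ZlSeries_of_IntC hp IntC_FHalf
  have hZH : ZlSeries ℓ Hser := ZlSeries_of_IntC hp IntC_Hser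
  have E1 : redS ℓ f = ∑ b ∈ range (K / 2 + 1), cb b • (T ^ (K - 2*b) * Fb ^ b) := by
    rw [hrep, redS_sum hp _ _ (fun b _ => ZlSeries_smul hp (hiz b) (hZmu b))]
    refine Finset.sum_congr rfl fun b _ => ?_
    rw [redS_smul hp (hiz b) (hZmu b)]
    unfold mu
    rw [redS_mul hp (ZlSeries_pow hp hZt _) (ZlSeries_pow hp hZF _),
      redS_pow hp hZt, redS_pow hp hZF]
  have E2 : redS ℓ (atHalf K f)
      = ∑ b ∈ range (K / 2 + 1), cb b • (tH ^ (K - 2*b) * FH ^ b) := by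
    unfold atHalf
    rw [redS_sum hp _ _ (fun b _ => ZlSeries_smul hp (hiz b)
      (ZlSeries_mul hp (ZlSeries_pow hp hZtH _) (ZlSeries_pow hp hZFH _)))]
    refine Finset.sum_congr rfl fun b _ => ?_
    rw [redS_smul hp (hiz b)
        (ZlSeries_mul hp (ZlSeries_pow hp hZtH _) (ZlSeries_pow hp hZFH _)),
      redS_mul hp (ZlSeries_pow hp hZtH _) (ZlSeries_pow hp hZFH _),
      redS_pow hp hZtH, redS_pow hp hZFH]
  have E3 : redS ℓ (atZero K f)
      = ∑ b ∈ range (K / 2 + 1), (cb b * eE b) • (T ^ (K - 2*b) * Hb ^ b) := by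
    unfold atZero
    rw [redS_sum hp _ _ (fun b _ => ZlSeries_smul hp
      (inZl_mul hp (inZl_mul hp (hiz b) (inZl_pow hp hiz1 _)) (inZl_pow hp hiz2 _))
      (ZlSeries_mul hp (ZlSeries_pow hp hZt _) (ZlSeries_pow hp hZH _)))]
    refine Finset.sum_congr rfl fun b _ => ?_
    rw [redS_smul hp
        (inZl_mul hp (inZl_mul hp (hiz b) (inZl_pow hp hiz1 _)) (inZl_pow hp hiz2 _))
        (ZlSeries_mul hp (ZlSeries_pow hp hZt _) (ZlSeries_pow hp hZH _)),
      redS_mul hp (ZlSeries_pow hp hZt _) (ZlSeries_pow hp hZH _),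
      redS_pow hp hZt, redS_pow hp hZH,
      red_mul hp (inZl_mul hp (hiz b) (inZl_pow hp hiz1 _)) (inZl_pow hp hiz2 _),
      red_mul hp (hiz b) (inZl_pow hp hiz1 _), red_pow hp hiz1, red_pow hp hiz2]
    rw [heEdef, hcb, mul_assoc]
  -- the auxiliary series w and s at the cusp 0
  set w : PowerSeries (ZMod ℓ) := PowerSeries.invOfUnit (T ^ 2) 1 * Hb with hw
  have hTw : T ^ 2 * w = Hb := by
    rw [hw, ← mul_assoc, PowerSeries.mul_invOfUnit _ 1 (by
      rw [map_pow, hT0, one_pow]; simp), one_mul]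
  have w0 : constantCoeff w = 1 := by
    have := congrArg (constantCoeff) hTw
    rw [map_mul, map_pow, hT0, one_pow, one_mul] at this
    rw [this, hH0]
  have hc2 : constantCoeff (T ^ 2) = 1 := by rw [map_pow, hT0, one_pow]
  have hc21 : coeff 1 (T ^ 2) = 8 := by
    rw [pow_two, coeff_one_mul', hT0, hT1]; ring
  have w1 : coeff 1 w = -16 := by
    have h := congrArg (coeff 1) hTw
    rw [coeff_one_mul', hc2, hc21, w0, hH1] at h
    linear_combination h
  set s : PowerSeries (ZMod ℓ) := w - 1 with hs
  have s0 : constantCoeff s = 0 := by rw [hs, map_sub, w0, map_one, sub_self]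
  have s1 : coeff 1 s = -16 := by
    rw [hs, map_sub, w1, PowerSeries.coeff_one, if_neg one_ne_zero, sub_zero]
  have h16 : (16 : ZMod ℓ) ≠ 0 := by
    have : ¬ (ℓ ∣ 16) := by
      intro h
      have h2 : ℓ ∣ 2 ^ 4 := by norm_num at h ⊢; exact h
      have := Nat.le_of_dvd (by norm_num) (hp.dvd_of_dvd_pow h2)
      omega
    intro h0
    exact this (by
      rwa [show (16 : ZMod ℓ) = ((16:ℕ) : ZMod ℓ) by push_cast; ring,
        ZMod.natCast_eq_zero_iff] at h0)
  have hs1ne : coeff 1 s ≠ 0 := by rw [s1]; exact neg_ne_zero.mpr h16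
  -- main case split
  by_cases hzero : ∀ b ∈ range (K / 2 + 1), cb b = 0
  · have hf0 : redS ℓ f = 0 := by
      rw [E1]
      exact Finset.sum_eq_zero fun b hb => by rw [hzero b hb, zero_smul]
    have hh0 : redS ℓ (atHalf K f) = 0 := by
      rw [E2]
      exact Finset.sum_eq_zero fun b hb => by rw [hzero b hb, zero_smul]
    have hz0 : redS ℓ (atZero K f) = 0 := by
      rw [E3]
      exact Finset.sum_eq_zero fun b hb => by rw [hzero b hb, zero_mul, zero_smul]
    exact ⟨hf0, by rw [hf0]; exact PowerSeries.order_zero,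
      by rw [hz0]; exact PowerSeries.order_zero,
      by rw [hh0]; exact PowerSeries.order_zero⟩
  · exfalso
    push_neg at hzero
    set Sset : Finset ℕ := (range (K / 2 + 1)).filter (fun b => cb b ≠ 0) with hSset
    have hSne : Sset.Nonempty := by
      obtain ⟨b, hb, hbne⟩ := hzero
      exact ⟨b, Finset.mem_filter.mpr ⟨hb, hbne⟩⟩
    set bmin := Sset.min' hSne with hbmin
    set bmax := Sset.max' hSne with hbmax
    have hminS : bmin ∈ Sset := Sset.min'_mem hSne
    have hmaxS : bmax ∈ Sset := Sset.max'_mem hSne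
    have hminmax : bmin ≤ bmax := Sset.min'_le _ (Sset.max'_mem hSne)
    have hminrange : bmin ∈ range (K / 2 + 1) := (Finset.mem_filter.mp hminS).1
    have hmaxrange : bmax ∈ range (K / 2 + 1) := (Finset.mem_filter.mp hmaxS).1
    have hmaxK : 2 * bmax ≤ K := by
      have := mem_range.mp hmaxrange
      omega
    have hcbmin : cb bmin ≠ 0 := (Finset.mem_filter.mp hminS).2
    have hcbmax : cb bmax ≠ 0 := (Finset.mem_filter.mp hmaxS).2
    have hlow : ∀ b ∈ range (K / 2 + 1), b < bmin → cb b = 0 := by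
      intro b hb hblt
      by_contra hne
      exact absurd (Sset.min'_le b (Finset.mem_filter.mpr ⟨hb, hne⟩)) (by omega)
    have hhigh : ∀ b ∈ range (K / 2 + 1), bmax < b → cb b = 0 := by
      intro b hb hblt
      by_contra hne
      exact absurd (Sset.le_max' b (Finset.mem_filter.mpr ⟨hb, hne⟩)) (by omega)
    have hSlb : ∀ b ∈ range (K / 2 + 1), cb b ≠ 0 → bmin ≤ b ∧ b ≤ bmax := by
      intro b hb hne
      exact ⟨Sset.min'_le b (Finset.mem_filter.mpr ⟨hb, hne⟩),
        Sset.le_max' b (Finset.mem_filter.mpr ⟨hb, hne⟩)⟩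
    -- Bound at infinity
    have key1 : coeff bmin (redS ℓ f) = cb bmin := by
      rw [E1, map_sum, Finset.sum_eq_single_of_mem bmin hminrange]
      · rw [PowerSeries.coeff_smul, smul_eq_mul,
          (coeff_unit_mul (pow_low hF0 bmin).1).2, (pow_low hF0 bmin).2, hF1, one_pow,
          map_pow, hT0, one_pow, one_mul, mul_one]
      · intro b hb hne
        rw [PowerSeries.coeff_smul, smul_eq_mul]
        rcases eq_or_ne (cb b) 0 with h | h
        · rw [h, zero_mul]
        · have := (hSlb b hb h).1
          rw [(coeff_unit_mul (pow_low hF0 b).1).1 bmin (by omega), mul_zero]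
    have bound1 : PowerSeries.order (redS ℓ f) ≤ (bmin : ℕ∞) :=
      PowerSeries.order_le _ (by rw [key1]; exact hcbmin)
    -- Bound at 1/2
    have key2 : coeff (K - 2 * bmax) (redS ℓ (atHalf K f)) = cb bmax := by
      rw [E2, map_sum, Finset.sum_eq_single_of_mem bmax hmaxrange]
      · rw [PowerSeries.coeff_smul, smul_eq_mul]
        have hm := coeff_mul_low (f := tH ^ (K - 2*bmax)) (g := FH ^ bmax)
          (a := K - 2*bmax) (b := 0) (pow_low htH0 _).1
          (fun j hj => absurd hj (Nat.not_lt_zero j))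
        have hm2 := hm.2
        rw [Nat.add_zero] at hm2
        rw [hm2, (pow_low htH0 _).2, htH1, one_pow,
          PowerSeries.coeff_zero_eq_constantCoeff, map_pow, hFH0, one_pow, one_mul,
          mul_one]
      · intro b hb hne
        rw [PowerSeries.coeff_smul, smul_eq_mul]
        rcases eq_or_ne (cb b) 0 with h | h
        · rw [h, zero_mul]
        · have hble := (hSlb b hb h).2
          have hblt : b < bmax := by omega
          have hm := coeff_mul_low (f := tH ^ (K - 2*b)) (g := FH ^ b)
            (a := K - 2*b) (b := 0) (pow_low htH0 _).1
            (fun j hj => absurd hj (Nat.not_lt_zero j))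
          have hv : K - 2*bmax < K - 2*b + 0 := by omega
          rw [hm.1 _ hv, mul_zero]
    have bound2 : PowerSeries.order (redS ℓ (atHalf K f)) ≤ ((K - 2*bmax : ℕ) : ℕ∞) :=
      PowerSeries.order_le _ (by rw [key2]; exact hcbmax)
    -- Bound at 0
    set U : PowerSeries (ZMod ℓ) := T ^ K * w ^ bmin with hU
    have hU0 : constantCoeff U = 1 := by
      rw [hU, map_mul, map_pow, map_pow, hT0, w0, one_pow, one_pow, one_mul]
    have hprod : ∀ b ∈ range (K / 2 + 1), cb b ≠ 0 →
        T ^ (K - 2*b) * Hb ^ b = U * w ^ (b - bmin) := by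
      intro b hb hne
      have h2b : 2 * b ≤ K := by
        have := mem_range.mp hb; omega
      have hminb : bmin ≤ b := (hSlb b hb hne).1
      rw [← hTw, mul_pow, ← pow_mul, ← mul_assoc, ← pow_add,
        show K - 2*b + 2*b = K from by omega, hU, mul_assoc, ← pow_add,
        show bmin + (b - bmin) = b from by omega]
    have hbinom : ∀ e : ℕ, e ≤ K / 2 →
        w ^ e = ∑ i ∈ range (K / 2 + 1), (Nat.choose e i : ZMod ℓ) • s ^ i := by
      intro e he
      have hw1 : w = s + 1 := by rw [hs]; ring
      rw [hw1, add_pow]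
      rw [← Finset.sum_subset (Finset.range_subset_range.mpr (by omega : e + 1 ≤ K / 2 + 1))]
      · exact Finset.sum_congr rfl fun i _ => by
          rw [one_pow, mul_one, PowerSeries.smul_eq_C_mul,
            map_natCast (PowerSeries.C), mul_comm]
      · intro i hi hni
        rw [mem_range] at hi hni
        rw [Nat.choose_eq_zero_of_lt (by omega), Nat.cast_zero, zero_smul]
    set γ : ℕ → ZMod ℓ := fun i =>
      ∑ b ∈ range (K / 2 + 1), (cb b * eE b) * (Nat.choose (b - bmin) i : ZMod ℓ) with hγ
    have hγi : ∀ i, γ i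
        = ∑ b ∈ range (K / 2 + 1), (cb b * eE b) * (Nat.choose (b - bmin) i : ZMod ℓ) :=
      fun i => rfl
    have EA : redS ℓ (atZero K f) = ∑ i ∈ range (K / 2 + 1), γ i • (U * s ^ i) := by
      rw [E3]
      have step1 : ∀ b ∈ range (K / 2 + 1),
          (cb b * eE b) • (T ^ (K - 2*b) * Hb ^ b)
            = ∑ i ∈ range (K / 2 + 1),
                ((cb b * eE b) * (Nat.choose (b - bmin) i : ZMod ℓ)) • (U * s ^ i) := by
        intro b hb
        rcases eq_or_ne (cb b) 0 with h | h
        · rw [h, zero_mul, zero_smul]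
          exact (Finset.sum_eq_zero fun i _ => by rw [zero_mul, zero_smul]).symm
        · rw [hprod b hb h, hbinom (b - bmin) (by
            have := mem_range.mp hb; omega), Finset.mul_sum, Finset.smul_sum]
          exact Finset.sum_congr rfl fun i _ => by
            rw [mul_smul_comm, smul_smul]
      rw [Finset.sum_congr rfl step1, Finset.sum_comm]
      exact Finset.sum_congr rfl fun i _ => by rw [hγi i, ← Finset.sum_smul]
    set d := bmax - bmin with hd
    have hγd : γ d = cb bmax * eE bmax := by
      rw [hγi d, Finset.sum_eq_single_of_mem bmax hmaxrange]
      · rw [hd, Nat.choose_self, Nat.cast_one, mul_one]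
      · intro b hb hne
        rcases eq_or_ne (cb b) 0 with h | h
        · rw [h, zero_mul, zero_mul]
        · have hlb := hSlb b hb h
          rw [Nat.choose_eq_zero_of_lt (by omega), Nat.cast_zero, mul_zero]
    set Iset : Finset ℕ := (range (K / 2 + 1)).filter (fun i => γ i ≠ 0) with hIset
    have hdI : d ∈ Iset := by
      refine Finset.mem_filter.mpr ⟨?_, by rw [hγd]; exact mul_ne_zero hcbmax (heE bmax)⟩
      rw [mem_range]
      have := mem_range.mp hmaxrange
      omega
    have hIne : Iset.Nonempty := ⟨d, hdI⟩
    set istar := Iset.min' hIne with histar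
    have histarI : istar ∈ Iset := Iset.min'_mem hIne
    have histard : istar ≤ d := Iset.min'_le _ hdI
    have hγistar : γ istar ≠ 0 := (Finset.mem_filter.mp histarI).2
    have histarrange : istar ∈ range (K / 2 + 1) := (Finset.mem_filter.mp histarI).1
    have key3 : coeff istar (redS ℓ (atZero K f)) = γ istar * (-16) ^ istar := by
      rw [EA, map_sum, Finset.sum_eq_single_of_mem istar histarrange]
      · rw [PowerSeries.coeff_smul, smul_eq_mul,
          (coeff_unit_mul (pow_low s0 istar).1).2, (pow_low s0 istar).2, s1,
          hU0, one_mul]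
      · intro i hi hne
        rw [PowerSeries.coeff_smul, smul_eq_mul]
        rcases eq_or_ne (γ i) 0 with h | h
        · rw [h, zero_mul]
        · have : istar ≤ i := Iset.min'_le i (Finset.mem_filter.mpr ⟨hi, h⟩)
          rw [(coeff_unit_mul (pow_low s0 i).1).1 istar (by omega), mul_zero]
    have bound3 : PowerSeries.order (redS ℓ (atZero K f)) ≤ (d : ℕ∞) := by
      refine le_trans (PowerSeries.order_le istar ?_) (by exact_mod_cast histard)
      rw [key3]
      exact mul_ne_zero hγistar (pow_ne_zero _ (neg_ne_zero.mpr h16))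
    -- final contradiction
    have hsum : 2 * PowerSeries.order (redS ℓ (atZero K f))
        + 2 * PowerSeries.order (redS ℓ f)
        + PowerSeries.order (redS ℓ (atHalf K f))
        ≤ ((2 * d + 2 * bmin + (K - 2 * bmax) : ℕ) : ℕ∞) := by
      push_cast
      exact add_le_add (add_le_add (mul_le_mul_right bound3 2)
        (mul_le_mul_right bound1 2)) bound2
    have heq : ((2 * d + 2 * bmin + (K - 2 * bmax) : ℕ) : ℕ∞) = ((K : ℕ) : ℕ∞) := by
      congr 1
      omega
    rw [heq] at hsum
    exact absurd (lt_of_lt_of_le hlt hsum) (lt_irrefl _)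

end MainAux

end Aux

/-- Corollary 5.2 (Sturm-style bound).  (a) If `f ∈ M_{2k}` and
`ord₀(f̄) + ord_∞(f̄) + ord_{1/2}(f̄) > k`, then all the orders are `+∞` and
`f̄ = 0`.  (b) If `f ∈ M_{2k+1}` and the sum exceeds `k + 1/2`, the same holds.
Orders: at `∞` in `q`-units, at `0` in `t = q^{1/4}`-units, at `1/2` in
`q`-units (half-integers), so the inequalities are stated with denominators
cleared (doubled, the `1/2`-order being the `u = q^{1/2}`-order divided by 2). -/
theorem sturm_bound (ℓ : ℕ) (hp : ℓ.Prime) (hℓ : 5 ≤ ℓ) (k : ℕ) :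
    -- (a)
    ((∀ f ∈ Mk (2 * k), ZlSeries ℓ f →
      ((2 * k : ℕ) : ℕ∞) <
          2 * PowerSeries.order (redS ℓ (atZero (2 * k) f))
            + 2 * PowerSeries.order (redS ℓ f)
            + PowerSeries.order (redS ℓ (atHalf (2 * k) f)) →
      (redS ℓ f = 0 ∧ PowerSeries.order (redS ℓ f) = ⊤ ∧
        PowerSeries.order (redS ℓ (atZero (2 * k) f)) = ⊤ ∧
        PowerSeries.order (redS ℓ (atHalf (2 * k) f)) = ⊤)) ∧
    -- (b)
    (∀ f ∈ Mk (2 * k + 1), ZlSeries ℓ f →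
      ((2 * k + 1 : ℕ) : ℕ∞) <
          2 * PowerSeries.order (redS ℓ (atZero (2 * k + 1) f))
            + 2 * PowerSeries.order (redS ℓ f)
            + PowerSeries.order (redS ℓ (atHalf (2 * k + 1) f)) →
      (redS ℓ f = 0 ∧ PowerSeries.order (redS ℓ f) = ⊤ ∧
        PowerSeries.order (redS ℓ (atZero (2 * k + 1) f)) = ⊤ ∧
        PowerSeries.order (redS ℓ (atHalf (2 * k + 1) f)) = ⊤))) := by
  constructor
  · intro f hf hZ hlt
    exact main_lemma ℓ hp hℓ (2 * k) f hf hZ hlt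
  · intro f hf hZ hlt
    exact main_lemma ℓ hp hℓ (2 * k + 1) f hf hZ hlt

end Paper
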